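/- arXiv:1008.0507 — 2 statements merged into one kernel-verified Lean document; each statement's English description precedes it below -/
import Mathlib

section
/- Let G be a group, and suppose there is a descending chain of normal subgroups γₖ (k ∈ ℤ₊) with γ₁ = G, [γₖ, G] ≤ γ_{k+1}, ⋂ₖ γₖ = {1}, and each quotient γₖ/γ_{k+1} torsion-free abelian. Then G is two-sided orderable. -/
lemma exists_pos_cone (A : Type*) [Group A] (hc : ∀ a b : A, a * b = b * a)
    (ht : ∀ (a : A) (n : ℕ), 0 < n → a ^ n = 1 → a = 1) :
    ∃ P : A → Prop, (∀ a b, P a → P b → P (a * b)) ∧ (∀ a, a ≠ 1 → P a ∨ P a⁻¹) ∧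
      (∀ a, P a → a ≠ 1 ∧ ¬ P a⁻¹) := by
  letI : CommGroup A := { (inferInstance : Group A) with mul_comm := hc }
  set A' := Additive A
  set S := nonZeroDivisors ℤ
  set V := LocalizedModule S A' with hV
  -- the natural map
  set j : A → V := fun a => LocalizedModule.mk (Additive.ofMul a) 1 with hj
  have hj_mul : ∀ a b : A, j (a * b) = j a + j b := by
    intro a b
    simp only [hj, ofMul_mul]
    rw [LocalizedModule.mk_add_mk]
    simp
  have hj_one : j 1 = 0 := by
    simp only [hj]
    exact LocalizedModule.zero_mk 1
  have hj_inj : ∀ a : A, j a = 0 → a = 1 := by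
    intro a ha
    rw [hj] at ha
    rw [show (0 : V) = LocalizedModule.mk 0 1 from (LocalizedModule.zero_mk 1).symm,
      LocalizedModule.mk_eq] at ha
    obtain ⟨u, hu⟩ := ha
    simp only [one_smul, smul_zero] at hu
    have hu0 : (u : ℤ) ≠ 0 := nonZeroDivisors.ne_zero u.2
    have hzp : a ^ (u : ℤ) = 1 := by
      have := congrArg Additive.toMul hu
      exact this
    rcases lt_trichotomy (u : ℤ) 0 with h | h | h
    · have h1 : a⁻¹ ^ ((-(u : ℤ))).toNat = 1 := by
        rw [← zpow_natCast, Int.toNat_of_nonneg (by omega), inv_zpow, zpow_neg, inv_inv, hzp]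
      have h2 := ht _ _ (by omega) h1
      simpa using congrArg (·⁻¹) h2
    · exact absurd h hu0
    · have h1 : a ^ ((u : ℤ)).toNat = 1 := by
        rw [← zpow_natCast, Int.toNat_of_nonneg (by omega), hzp]
      exact ht _ _ (by omega) h1
  letI : Module ℚ V :=
    Module.compHom V (IsLocalization.algEquiv S (Localization S) ℚ).symm.toRingEquiv.toRingHom
  set ι := Module.Basis.ofVectorSpaceIndex ℚ V
  set b : Module.Basis ι ℚ V := Module.Basis.ofVectorSpace ℚ V
  letI : LinearOrder ι := IsWellOrder.linearOrder WellOrderingRel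
  set L := Lex (ι →₀ ℚ)
  set f : A → L := fun a => toLex (b.repr (j a)) with hf
  refine ⟨fun a => 0 < f a, ?_, ?_, ?_⟩
  · intro a c ha hb
    have : f (a * c) = f a + f c := by
      simp only [hf, hj_mul, map_add]
      rfl
    show 0 < f (a * c)
    rw [this]
    exact add_pos ha hb
  · intro a ha
    have hne : f a ≠ 0 := by
      intro h0
      apply ha
      apply hj_inj
      have : b.repr (j a) = 0 := by exact_mod_cast h0
      have := congrArg b.repr.symm this
      simpa using this
    have hfi : f a⁻¹ = -f a := by
      have h1 : j a⁻¹ + j a = 0 := by rw [← hj_mul, inv_mul_cancel, hj_one]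
      have h2 : f a⁻¹ + f a = 0 := by
        show toLex (b.repr (j a⁻¹)) + toLex (b.repr (j a)) = 0
        have : b.repr (j a⁻¹) + b.repr (j a) = 0 := by rw [← map_add, h1, map_zero]
        exact congrArg toLex this
      exact eq_neg_of_add_eq_zero_left h2
    rcases hne.lt_or_gt with h | h
    · right; show 0 < f a⁻¹; rw [hfi]; exact neg_pos.mpr h
    · left; exact h
  · intro a ha
    have hfi : f a⁻¹ = -f a := by
      have h1 : j a⁻¹ + j a = 0 := by rw [← hj_mul, inv_mul_cancel, hj_one]
      have h2 : f a⁻¹ + f a = 0 := by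
        show toLex (b.repr (j a⁻¹)) + toLex (b.repr (j a)) = 0
        have : b.repr (j a⁻¹) + b.repr (j a) = 0 := by rw [← map_add, h1, map_zero]
        exact congrArg toLex this
      exact eq_neg_of_add_eq_zero_left h2
    constructor
    · rintro rfl
      have : f 1 = 0 := by
        show toLex (b.repr (j 1)) = 0
        rw [hj_one, map_zero]
        rfl
      rw [this] at ha
      exact lt_irrefl _ ha
    · show ¬ 0 < f a⁻¹
      rw [hfi]
      intro h
      exact absurd (neg_pos.mp h) (not_lt.mpr ha.le)


/-- If a group `G` has a descending chain of normal subgroups `γ k` with `γ 0 = G`,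
`[γ k, G] ≤ γ (k+1)`, trivial intersection, and torsion-free abelian quotients
`γ k / γ (k+1)`, then `G` is two-sided orderable. -/
theorem orderable_of_central_series {G : Type*} [Group G]
    (γ : ℕ → Subgroup G)
    (hnorm : ∀ k, (γ k).Normal)
    (htop : γ 0 = ⊤)
    (hdesc : ∀ k, γ (k + 1) ≤ γ k)
    (hcomm : ∀ k, ⁅γ k, (⊤ : Subgroup G)⁆ ≤ γ (k + 1))
    (hint : ∀ g : G, (∀ k, g ∈ γ k) → g = 1)
    (htf : ∀ k, ∀ g ∈ γ k, ∀ n : ℕ, 0 < n → g ^ n ∈ γ (k + 1) → g ∈ γ (k + 1)) :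
    ∃ lt : G → G → Prop, IsStrictTotalOrder G lt ∧
      ∀ f g h x : G, lt f g → lt (h * f * x) (h * g * x) := by
  classical
  have hmono : ∀ i j : ℕ, i ≤ j → γ j ≤ γ i := by
    intro i j hij
    induction j with
    | zero =>
      have : i = 0 := by omega
      subst this; exact le_refl _
    | succ n ih =>
      rcases Nat.lt_or_ge i (n+1) with h | h
      · exact le_trans (hdesc n) (ih (by omega))
      · have : i = n + 1 := by omega
        subst this; exact le_refl _
  have hmono0 : ∀ i j : ℕ, i ≤ j → γ j ≤ γ i := hmono
  have hcommEl : ∀ k (a x : G), a ∈ γ k → a * x * a⁻¹ * x⁻¹ ∈ γ (k + 1) := by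
    intro k a x ha
    exact Subgroup.commutator_le.mp (hcomm k) a ha x (Subgroup.mem_top x)
  haveI hNk : ∀ k, ((γ (k + 1)).subgroupOf (γ k)).Normal :=
    fun k => (hnorm (k + 1)).subgroupOf _
  -- quotient groups
  set Q : ℕ → Type _ := fun k => γ k ⧸ (γ (k + 1)).subgroupOf (γ k) with hQ
  have hQcomm : ∀ k (x y : Q k), x * y = y * x := by
    intro k x y
    induction x using QuotientGroup.induction_on with | H a =>
    induction y using QuotientGroup.induction_on with | H b =>
    rw [← QuotientGroup.mk_mul, ← QuotientGroup.mk_mul, QuotientGroup.eq,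
      Subgroup.mem_subgroupOf]
    have : ((a * b)⁻¹ * (b * a) : γ k) = (↑b)⁻¹ * (↑a)⁻¹ * (↑b) * (↑a) := by
      push_cast; group
    rw [this]
    have := hcommEl k (↑b)⁻¹ (↑a)⁻¹ (inv_mem b.2)
    simpa [mul_assoc] using this
  have hQtf : ∀ k (x : Q k) (n : ℕ), 0 < n → x ^ n = 1 → x = 1 := by
    intro k x n hn hx
    induction x using QuotientGroup.induction_on with | H a =>
    rw [← QuotientGroup.mk_pow, QuotientGroup.eq_one_iff, Subgroup.mem_subgroupOf] at hx
    rw [QuotientGroup.eq_one_iff, Subgroup.mem_subgroupOf]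
    rw [show ((a ^ n : γ k) : G) = (↑a) ^ n from by push_cast; ring] at hx
    exact htf k (↑a) a.2 n hn hx
  choose P hPmul hPtri hPasym using fun k => exists_pos_cone (Q k) (hQcomm k) (hQtf k)
  -- level
  have hlevel : ∀ g : G, g ≠ 1 → ∃ k, g ∈ γ k ∧ g ∉ γ (k + 1) := by
    intro g hg
    have hex : ∃ n, g ∉ γ (n + 1) := by
      by_contra h
      push_neg at h
      exact hg (hint g (fun k => by cases k with
        | zero => rw [htop]; trivial
        | succ m => exact h m))
    refine ⟨Nat.find hex, ?_, Nat.find_spec hex⟩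
    rcases Nat.eq_zero_or_pos (Nat.find hex) with h0 | h0
    · rw [h0, htop]; trivial
    · obtain ⟨m, hm⟩ := Nat.exists_eq_succ_of_ne_zero (by omega : Nat.find hex ≠ 0)
      rw [hm]
      have := Nat.find_min hex (by omega : m < Nat.find hex)
      simpa using this
  have hlevel_unique : ∀ (g : G) (k l : ℕ), g ∈ γ k → g ∉ γ (k + 1) → g ∈ γ l →
      g ∉ γ (l + 1) → k = l := by
    intro g k l hk hk1 hl hl1
    by_contra hne
    rcases Nat.lt_or_ge k l with h | h
    · exact hk1 (hmono (k + 1) l (by omega) hl)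
    · exact hl1 (hmono (l + 1) k (by omega) hk)
  -- positivity helpers
  have hmkeq : ∀ (k : ℕ) (a b : G) (ha : a ∈ γ k) (hb : b ∈ γ k), a⁻¹ * b ∈ γ (k + 1) →
      (QuotientGroup.mk ⟨a, ha⟩ : Q k) = QuotientGroup.mk ⟨b, hb⟩ := by
    intro k a b ha hb hab
    rw [QuotientGroup.eq, Subgroup.mem_subgroupOf]
    simpa using hab
  have hmkone : ∀ (k : ℕ) (a : G) (ha : a ∈ γ k),
      (QuotientGroup.mk ⟨a, ha⟩ : Q k) = 1 ↔ a ∈ γ (k + 1) := by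
    intro k a ha
    rw [QuotientGroup.eq_one_iff, Subgroup.mem_subgroupOf]
  set Pos : G → Prop := fun g => ∃ k, ∃ h : g ∈ γ k, g ∉ γ (k + 1) ∧
    P k (QuotientGroup.mk ⟨g, h⟩) with hPos
  have hPos_ne_one : ∀ g, Pos g → g ≠ 1 := by
    rintro g ⟨k, hk, hk1, -⟩ rfl
    exact hk1 (one_mem _)
  have hPos_mul : ∀ g h, Pos g → Pos h → Pos (g * h) := by
    rintro g h ⟨k, hk, hk1, hkP⟩ ⟨l, hl, hl1, hlP⟩
    rcases lt_trichotomy k l with hkl | hkl | hkl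
    · have hh1 : h ∈ γ (k + 1) := hmono (k + 1) l (by omega) hl
      have hgh : g * h ∈ γ k := mul_mem hk (hdesc k hh1)
      have hgh1 : g * h ∉ γ (k + 1) := by
        intro hmem
        exact hk1 (by simpa using mul_mem hmem (inv_mem hh1))
      refine ⟨k, hgh, hgh1, ?_⟩
      rw [← hmkeq k g (g * h) hk hgh (by simpa using hh1)]
      exact hkP
    · subst hkl
      have hgh : g * h ∈ γ k := mul_mem hk hl
      have hmul : (QuotientGroup.mk ⟨g * h, hgh⟩ : Q k) =
          QuotientGroup.mk ⟨g, hk⟩ * QuotientGroup.mk ⟨h, hl⟩ := rfl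
      have hP' := hPmul k _ _ hkP hlP
      rw [← hmul] at hP'
      have hne := (hPasym k _ hP').1
      refine ⟨k, hgh, ?_, hP'⟩
      intro hmem
      exact hne ((hmkone k _ hgh).mpr hmem)
    · have hg1 : g ∈ γ (l + 1) := hmono (l + 1) k (by omega) hk
      have hgh : g * h ∈ γ l := mul_mem (hdesc l hg1) hl
      have hgh1 : g * h ∉ γ (l + 1) := by
        intro hmem
        exact hl1 (by simpa using mul_mem (inv_mem hg1) hmem)
      refine ⟨l, hgh, hgh1, ?_⟩
      rw [← hmkeq l h (g * h) hl hgh ?_]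
      · exact hlP
      · have : h⁻¹ * (g * h) = h⁻¹ * g * h := by group
        rw [this]
        have := (hnorm (l + 1)).conj_mem g hg1 h⁻¹
        simpa [mul_assoc] using this
  have hPos_conj : ∀ g x, Pos g → Pos (x * g * x⁻¹) := by
    rintro g x ⟨k, hk, hk1, hkP⟩
    have hmem : x * g * x⁻¹ ∈ γ k := (hnorm k).conj_mem g hk x
    have hnmem : x * g * x⁻¹ ∉ γ (k + 1) := by
      intro hm
      have := (hnorm (k + 1)).conj_mem _ hm x⁻¹
      apply hk1
      simpa [mul_assoc] using this
    refine ⟨k, hmem, hnmem, ?_⟩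
    rw [← hmkeq k g (x * g * x⁻¹) hk hmem ?_]
    · exact hkP
    · have : g⁻¹ * (x * g * x⁻¹) = g⁻¹ * x * (g⁻¹)⁻¹ * x⁻¹ := by group
      rw [this]
      exact hcommEl k g⁻¹ x (inv_mem hk)
  have hPos_tri : ∀ g : G, g ≠ 1 → Pos g ∨ Pos g⁻¹ := by
    intro g hg
    obtain ⟨k, hk, hk1⟩ := hlevel g hg
    have hne : (QuotientGroup.mk ⟨g, hk⟩ : Q k) ≠ 1 := fun h => hk1 ((hmkone k g hk).mp h)
    have hinv : (QuotientGroup.mk ⟨g, hk⟩ : Q k)⁻¹ = QuotientGroup.mk ⟨g⁻¹, inv_mem hk⟩ := rfl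
    rcases hPtri k _ hne with h | h
    · exact Or.inl ⟨k, hk, hk1, h⟩
    · right
      refine ⟨k, inv_mem hk, fun hm => hk1 (by simpa using inv_mem hm), ?_⟩
      rw [← hinv]
      exact h
  have hPos_asym : ∀ g, Pos g → ¬ Pos g⁻¹ := by
    rintro g ⟨k, hk, hk1, hkP⟩ ⟨l, hl, hl1, hlP⟩
    have hgl : g ∈ γ l := by simpa using inv_mem hl
    have hgl1 : g ∉ γ (l + 1) := fun hm => hl1 (inv_mem hm)
    have hkeq : k = l := hlevel_unique g k l hk hk1 hgl hgl1
    subst hkeq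
    have hinv : (QuotientGroup.mk ⟨g⁻¹, hl⟩ : Q k) = (QuotientGroup.mk ⟨g, hk⟩ : Q k)⁻¹ := rfl
    rw [hinv] at hlP
    exact (hPasym k _ hkP).2 hlP
  -- the order
  set lt : G → G → Prop := fun f g => Pos (f⁻¹ * g) with hlt
  haveI htri : IsTrichotomous G lt := ⟨?tri⟩
  case tri =>
    intro a b
    suffices H : lt a b ∨ a = b ∨ lt b a from fun h1 h2 =>
      H.elim (fun h => absurd h h1) (fun h => h.elim id (fun h => absurd h h2))
    by_cases hab : a = b
    · exact Or.inr (Or.inl hab)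
    · have hne : a⁻¹ * b ≠ 1 := fun h => hab (by
        have := congrArg (a * ·) h
        simpa [mul_assoc] using this.symm)
      rcases hPos_tri _ hne with h | h
      · exact Or.inl h
      · refine Or.inr (Or.inr ?_)
        have : (a⁻¹ * b)⁻¹ = b⁻¹ * a := by group
        show Pos (b⁻¹ * a)
        rwa [this] at h
  haveI hirr : IsIrrefl G lt := ⟨fun a h => hPos_ne_one _ h (by simp)⟩
  haveI htr : IsTrans G lt := ⟨?tr⟩
  case tr =>
    intro a b c hab hbc
    have := hPos_mul _ _ hab hbc
    have heq : a⁻¹ * b * (b⁻¹ * c) = a⁻¹ * c := by group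
    show Pos (a⁻¹ * c)
    rwa [heq] at this
  haveI : IsStrictOrder G lt := ⟨⟩
  refine ⟨lt, ⟨⟩, ?_⟩
  intro f g h x hfg
  have := hPos_conj _ x⁻¹ hfg
  have heq : x⁻¹ * (f⁻¹ * g) * x⁻¹⁻¹ = (h * f * x)⁻¹ * (h * g * x) := by group
  show Pos ((h * f * x)⁻¹ * (h * g * x))
  rwa [heq] at this
end

section
/- Let T be a free group on generators {t_g : g ∈ Λ} with Λ a totally ordered set, and C_g the normal closure of {t_f : f < g}, C(g) the normal closure of {t_f : f ≤ g}. Then every nontrivial w ∈ T lies in C(g) \ C_g for exactly one g ∈ Λ. -/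
namespace ExistsUniqueLevelAux

variable {Λ : Type*}

open Classical in
/-- The homomorphism killing the generators in `S`. -/
noncomputable def kill (S : Set Λ) : FreeGroup Λ →* FreeGroup Λ :=
  FreeGroup.lift (fun f => if f ∈ S then 1 else FreeGroup.of f)

open Classical in
theorem kill_of_mem {S : Set Λ} {f : Λ} (h : f ∈ S) : kill S (FreeGroup.of f) = 1 := by
  simp [kill, h]

open Classical in
theorem kill_of_not_mem {S : Set Λ} {f : Λ} (h : f ∉ S) :
    kill S (FreeGroup.of f) = FreeGroup.of f := by
  simp [kill, h]

theorem kill_empty (w : FreeGroup Λ) : kill (∅ : Set Λ) w = w := by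
  have : kill (∅ : Set Λ) = MonoidHom.id (FreeGroup Λ) := by
    apply FreeGroup.ext_hom
    intro a
    simp [kill]
  rw [this]; rfl

theorem mem_normalClosure_iff (S : Set Λ) (w : FreeGroup Λ) :
    w ∈ Subgroup.normalClosure (FreeGroup.of '' S) ↔ kill S w = 1 := by
  constructor
  · intro hw
    have h1 : Subgroup.normalClosure (FreeGroup.of '' S) ≤ (kill S).ker := by
      apply Subgroup.normalClosure_le_normal
      rintro x ⟨f, hf, rfl⟩
      exact kill_of_mem hf
    exact h1 hw
  · intro hw
    set N := Subgroup.normalClosure (FreeGroup.of '' S)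
    have hN : N.Normal := Subgroup.normalClosure_normal
    let q : FreeGroup Λ →* FreeGroup Λ ⧸ N := QuotientGroup.mk' N
    have key : q.comp (kill S) = q := by
      apply FreeGroup.ext_hom
      intro a
      by_cases ha : a ∈ S
      · have : FreeGroup.of a ∈ N :=
          Subgroup.subset_normalClosure ⟨a, ha, rfl⟩
        simp only [MonoidHom.comp_apply, kill_of_mem ha, map_one]
        exact ((QuotientGroup.eq_one_iff _).2 this).symm
      · simp [kill_of_not_mem ha]
    have : q w = 1 := by
      have := congrArg (fun φ : FreeGroup Λ →* _ => φ w) key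
      simp only [MonoidHom.comp_apply, hw, map_one] at this
      exact this.symm
    exact (QuotientGroup.eq_one_iff _).1 this

/-- `kill S w` only depends on `S ∩ letters of w`. -/
theorem kill_congr [DecidableEq Λ] {S S' : Set Λ} (w : FreeGroup Λ)
    (h : ∀ x ∈ w.toWord, (x.1 ∈ S ↔ x.1 ∈ S')) : kill S w = kill S' w := by
  conv_lhs => rw [← FreeGroup.mk_toWord (x := w)]
  conv_rhs => rw [← FreeGroup.mk_toWord (x := w)]
  rw [kill, kill, FreeGroup.lift_mk, FreeGroup.lift_mk]
  congr 1
  apply List.map_congr_left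
  intro x hx
  have := h x hx
  by_cases hxS : x.1 ∈ S
  · simp [hxS, this.1 hxS]
  · have hxS' : x.1 ∉ S' := fun h' => hxS (this.2 h')
    simp [kill_of_not_mem (S := S) hxS, hxS, hxS']

theorem kill_eq_one_of_letters [DecidableEq Λ] {S : Set Λ} (w : FreeGroup Λ)
    (h : ∀ x ∈ w.toWord, x.1 ∈ S) : kill S w = 1 := by
  conv_lhs => rw [← FreeGroup.mk_toWord (x := w)]
  rw [kill, FreeGroup.lift_mk]
  apply List.prod_eq_one
  intro a ha
  rw [List.mem_map] at ha
  obtain ⟨x, hx, rfl⟩ := ha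
  have := h x hx
  cases x.2 <;> simp [this]

end ExistsUniqueLevelAux

open ExistsUniqueLevelAux in
/-- Let `T` be the free group on generators indexed by a totally ordered set `Λ`, and
for `g ∈ Λ` let `C_g` (resp. `C(g)`) be the normal closure of the generators with
index `< g` (resp. `≤ g`).  Then every nontrivial `w ∈ T` lies in `C(g) \ C_g` for
exactly one `g ∈ Λ`. -/
theorem exists_unique_level {Λ : Type*} [LinearOrder Λ]
    (w : FreeGroup Λ) (hw : w ≠ 1) :
    ∃! g : Λ,
      w ∈ Subgroup.normalClosure (FreeGroup.of '' {f : Λ | f ≤ g}) ∧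
      w ∉ Subgroup.normalClosure (FreeGroup.of '' {f : Λ | f < g}) := by
  classical
  -- the finite set of letters of `w`
  set L : Finset Λ := w.toWord.toFinset.image Prod.fst with hL
  have hmemL : ∀ x ∈ w.toWord, x.1 ∈ L := by
    intro x hx
    exact Finset.mem_image.2 ⟨x, List.mem_toFinset.2 hx, rfl⟩
  have hLne : L.Nonempty := by
    rcases List.exists_mem_of_ne_nil w.toWord (fun h => hw (FreeGroup.toWord_eq_nil_iff.1 h))
      with ⟨x, hx⟩
    exact ⟨x.1, hmemL x hx⟩
  -- reduction: membership at level `g` comes from a letter `≤ g`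
  have reduce : ∀ g : Λ, kill {f : Λ | f ≤ g} w = 1 →
      ∃ l ∈ L, l ≤ g ∧ kill {f : Λ | f ≤ l} w = 1 := by
    intro g hg
    set Lg := L.filter (fun x => x ≤ g) with hLg
    rcases Lg.eq_empty_or_nonempty with he | hne
    · exfalso
      have : kill {f : Λ | f ≤ g} w = kill (∅ : Set Λ) w := by
        apply kill_congr
        intro x hx
        simp only [Set.mem_setOf_eq, Set.mem_empty_iff_false, iff_false]
        intro hxg
        have : x.1 ∈ Lg := Finset.mem_filter.2 ⟨hmemL x hx, hxg⟩
        rw [he] at this; exact absurd this (Finset.notMem_empty _)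
      rw [this, kill_empty] at hg
      exact hw hg
    · set l := Lg.max' hne with hl
      have hlL : l ∈ L := (Finset.mem_filter.1 (Lg.max'_mem hne)).1
      have hlg : l ≤ g := (Finset.mem_filter.1 (Lg.max'_mem hne)).2
      refine ⟨l, hlL, hlg, ?_⟩
      rw [← hg]
      apply kill_congr
      intro x hx
      simp only [Set.mem_setOf_eq]
      constructor
      · intro h; exact h.trans hlg
      · intro h; exact Lg.le_max' _ (Finset.mem_filter.2 ⟨hmemL x hx, h⟩)
  have reduce' : ∀ g : Λ, kill {f : Λ | f < g} w = 1 →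
      ∃ l ∈ L, l < g ∧ kill {f : Λ | f ≤ l} w = 1 := by
    intro g hg
    set Lg := L.filter (fun x => x < g) with hLg
    rcases Lg.eq_empty_or_nonempty with he | hne
    · exfalso
      have : kill {f : Λ | f < g} w = kill (∅ : Set Λ) w := by
        apply kill_congr
        intro x hx
        simp only [Set.mem_setOf_eq, Set.mem_empty_iff_false, iff_false]
        intro hxg
        have : x.1 ∈ Lg := Finset.mem_filter.2 ⟨hmemL x hx, hxg⟩
        rw [he] at this; exact absurd this (Finset.notMem_empty _)
      rw [this, kill_empty] at hg
      exact hw hg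
    · set l := Lg.max' hne with hl
      have hlL : l ∈ L := (Finset.mem_filter.1 (Lg.max'_mem hne)).1
      have hlg : l < g := (Finset.mem_filter.1 (Lg.max'_mem hne)).2
      refine ⟨l, hlL, hlg, ?_⟩
      rw [← hg]
      apply kill_congr
      intro x hx
      simp only [Set.mem_setOf_eq]
      constructor
      · intro h; exact lt_of_le_of_lt h hlg
      · intro h; exact Lg.le_max' _ (Finset.mem_filter.2 ⟨hmemL x hx, h⟩)
  -- the candidate levels among letters
  set T := L.filter (fun l => kill {f : Λ | f ≤ l} w = 1) with hT
  have hTne : T.Nonempty := by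
    set m := L.max' hLne with hm
    refine ⟨m, Finset.mem_filter.2 ⟨L.max'_mem hLne, ?_⟩⟩
    apply kill_eq_one_of_letters
    intro x hx
    exact L.le_max' _ (hmemL x hx)
  set g₀ := T.min' hTne with hg₀
  have hg₀T := T.min'_mem hTne
  have hg₀1 : kill {f : Λ | f ≤ g₀} w = 1 := (Finset.mem_filter.1 hg₀T).2
  refine ⟨g₀, ⟨?_, ?_⟩, ?_⟩
  · exact (mem_normalClosure_iff _ w).2 hg₀1
  · intro hmem
    rcases reduce' g₀ ((mem_normalClosure_iff _ w).1 hmem) with ⟨l, hlL, hlg, hl1⟩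
    have : g₀ ≤ l := T.min'_le l (Finset.mem_filter.2 ⟨hlL, hl1⟩)
    exact absurd hlg (not_lt.2 this)
  · rintro g ⟨hg1, hg2⟩
    rcases reduce g ((mem_normalClosure_iff _ w).1 hg1) with ⟨l, hlL, hlg, hl1⟩
    have hle : g₀ ≤ g := le_trans (T.min'_le l (Finset.mem_filter.2 ⟨hlL, hl1⟩)) hlg
    rcases eq_or_lt_of_le hle with h | h
    · exact h.symm
    · exfalso
      apply hg2
      have hsub : FreeGroup.of '' {f : Λ | f ≤ g₀} ⊆ FreeGroup.of '' {f : Λ | f < g} :=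
        Set.image_mono (fun f hf => lt_of_le_of_lt hf h)
      exact Subgroup.normalClosure_mono hsub ((mem_normalClosure_iff _ w).2 hg₀1)
end
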